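/- Assume the symmetric unisolvent setup: B = {f_1,…,f_N} is a linearly independent symmetric set of functions, F = span(B), P = {a_1,…,a_N} is a symmetric set of N points, and the interpolation problem is unisolvent. For each partition λ of n choose a point w_λ ∈ ℝ^n of type λ and set H_λ = Stab(w_λ) ≤ S_n. Let v_{λμ} be the number of H_λ-orbits of the S_n-orbit of w_μ, let X_μ be the number of S_n-orbits of P of type μ, and let r_λ be the number of H_λ-orbits of the set B. Then for every partition λ of n: Σ_{μ a partition of n} v_{λμ} · X_μ = r_λ. -/

import Mathlib

/-- The action of `S_n` on `ℝ^n` by permuting coordinates: `σ • x = x ∘ σ⁻¹`. -/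
def psmul {n : ℕ} (σ : Equiv.Perm (Fin n)) (x : Fin n → ℝ) : Fin n → ℝ := x ∘ ⇑σ⁻¹

/-- The action of `S_n` on functions `ℝ^n → ℝ`: `(σ • f)(x) = f(σ⁻¹ • x)`. -/
def fsmul {n : ℕ} (σ : Equiv.Perm (Fin n)) (f : (Fin n → ℝ) → ℝ) : (Fin n → ℝ) → ℝ :=
  fun x => f (psmul σ⁻¹ x)

/-- The `S_n`-orbit of a point `x ∈ ℝ^n`. -/
def porbit {n : ℕ} (x : Fin n → ℝ) : Set (Fin n → ℝ) := {y | ∃ σ, psmul σ x = y}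

/-- The type of a point `x ∈ ℝ^n`: the multiset of its fiber sizes. -/
noncomputable def ptype {n : ℕ} (x : Fin n → ℝ) : Multiset ℕ :=
  (Finset.image x Finset.univ).val.map fun v => (Finset.univ.filter fun j => x j = v).card

/-- The stabilizer `Stab(w) = {σ ∈ S_n : σ • w = w}` of `w ∈ ℝ^n`. -/
def stab {n : ℕ} (w : Fin n → ℝ) : Set (Equiv.Perm (Fin n)) := {σ | psmul σ w = w}

/-- The orbit of a point under the action of a set of permutations. -/
def orbitUnder {n : ℕ} (H : Set (Equiv.Perm (Fin n))) (x : Fin n → ℝ) : Set (Fin n → ℝ) :=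
  {y | ∃ σ ∈ H, psmul σ x = y}

/-- The orbit of a function under the action of a set of permutations. -/
def forbitUnder {n : ℕ} (H : Set (Equiv.Perm (Fin n))) (g : (Fin n → ℝ) → ℝ) :
    Set ((Fin n → ℝ) → ℝ) := {h | ∃ σ ∈ H, fsmul σ g = h}

/-- The number of orbits of `S ⊆ ℝ^n` under the action of `H`. -/
noncomputable def numOrbitsUnder {n : ℕ} (H : Set (Equiv.Perm (Fin n)))
    (S : Set (Fin n → ℝ)) : ℕ :=
  {O : Set (Fin n → ℝ) | ∃ x ∈ S, O = orbitUnder H x}.ncard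

/-- The number of orbits of a set of functions under the action of `H`. -/
noncomputable def fnumOrbitsUnder {n : ℕ} (H : Set (Equiv.Perm (Fin n)))
    (S : Set ((Fin n → ℝ) → ℝ)) : ℕ :=
  {O : Set ((Fin n → ℝ) → ℝ) | ∃ g ∈ S, O = forbitUnder H g}.ncard

/-- The Lagrange interpolation problem with interpolation space `F` and nodes
`a 1, …, a N` is unisolvent. -/
def Unisolvent {n N : ℕ} (F : Submodule ℝ ((Fin n → ℝ) → ℝ))
    (a : Fin N → (Fin n → ℝ)) : Prop :=
  ∀ b : Fin N → ℝ, ∃! f : F, ∀ i, (f : (Fin n → ℝ) → ℝ) (a i) = b i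

namespace Stmt7Aux

variable {n N : ℕ}

theorem psmul_one (x : Fin n → ℝ) : psmul 1 x = x := rfl

theorem psmul_mul (σ τ : Equiv.Perm (Fin n)) (x : Fin n → ℝ) :
    psmul σ (psmul τ x) = psmul (σ * τ) x := by
  funext i
  simp [psmul, Function.comp, Equiv.Perm.mul_apply]

theorem fsmul_one (g : (Fin n → ℝ) → ℝ) : fsmul 1 g = g := by
  funext x; simp [fsmul, psmul_one]

theorem fsmul_mul (σ τ : Equiv.Perm (Fin n)) (g : (Fin n → ℝ) → ℝ) :
    fsmul σ (fsmul τ g) = fsmul (σ * τ) g := by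
  funext x
  simp [fsmul, psmul_mul, mul_inv_rev]

theorem fsmul_apply (σ : Equiv.Perm (Fin n)) (g : (Fin n → ℝ) → ℝ) (x : Fin n → ℝ) :
    fsmul σ g x = g (psmul σ⁻¹ x) := rfl

/-- `stab w` as a subgroup. -/
def stabSubgroup (w : Fin n → ℝ) : Subgroup (Equiv.Perm (Fin n)) where
  carrier := stab w
  one_mem' := by simp [stab, psmul_one]
  mul_mem' := by
    intro σ τ hσ hτ
    simp only [stab, Set.mem_setOf_eq] at *
    rw [← psmul_mul, hτ, hσ]
  inv_mem' := by
    intro σ hσ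
    simp only [stab, Set.mem_setOf_eq] at *
    conv_lhs => rw [← hσ, psmul_mul]
    simp [psmul_one]

theorem mem_stabSubgroup {w : Fin n → ℝ} {σ : Equiv.Perm (Fin n)} :
    σ ∈ stabSubgroup w ↔ σ ∈ stab w := Iff.rfl

-- ===== ptype lemmas =====

theorem ptype_psmul (σ : Equiv.Perm (Fin n)) (x : Fin n → ℝ) :
    ptype (psmul σ x) = ptype x := by
  unfold ptype
  have himg : Finset.image (psmul σ x) Finset.univ = Finset.image x Finset.univ := by
    show Finset.image (x ∘ ⇑σ⁻¹) Finset.univ = _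
    rw [← Finset.image_image, Finset.image_univ_equiv]
  rw [himg]
  congr 1
  funext v
  apply Finset.card_bij' (fun j _ => σ⁻¹ j) (fun j _ => σ j)
  · intro j hj
    simp only [Finset.mem_filter, Finset.mem_univ, true_and] at *
    exact hj
  · intro j hj
    simp only [Finset.mem_filter, Finset.mem_univ, true_and] at *
    simpa [psmul] using hj
  · intro j _; simp
  · intro j _; simp

theorem mem_porbit_self (x : Fin n → ℝ) : x ∈ porbit x := ⟨1, rfl⟩

theorem porbit_eq_of_mem {x y : Fin n → ℝ} (h : y ∈ porbit x) : porbit y = porbit x := by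
  obtain ⟨σ, rfl⟩ := h
  ext z
  constructor
  · rintro ⟨τ, rfl⟩; exact ⟨τ * σ, (psmul_mul τ σ x).symm⟩
  · rintro ⟨τ, rfl⟩
    refine ⟨τ * σ⁻¹, ?_⟩
    rw [psmul_mul, mul_assoc, inv_mul_cancel, mul_one]

theorem ptype_eq_of_mem_porbit {x y : Fin n → ℝ} (h : y ∈ porbit x) : ptype y = ptype x := by
  obtain ⟨σ, rfl⟩ := h; exact ptype_psmul σ x

/-- The type of a point as a partition of `n`. -/
noncomputable def typePartition (x : Fin n → ℝ) : Nat.Partition n where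
  parts := ptype x
  parts_pos := by
    intro p hp
    unfold ptype at hp
    rw [Multiset.mem_map] at hp
    obtain ⟨v, hv, rfl⟩ := hp
    rw [← Finset.mem_def, Finset.mem_image] at hv
    obtain ⟨j, _, rfl⟩ := hv
    exact Finset.card_pos.mpr ⟨j, by simp⟩
  parts_sum := by
    unfold ptype
    have := Finset.card_eq_sum_card_fiberwise
      (f := x) (s := Finset.univ) (t := Finset.image x Finset.univ)
      (fun j _ => Finset.mem_image_of_mem x (Finset.mem_univ j))
    simpa [Finset.sum] using this.symm

theorem typePartition_parts (x : Fin n → ℝ) : (typePartition x).parts = ptype x := rfl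


-- Rel with nodup gives a bijection
theorem rel_nodup_exists_bij {α β : Type} [Nonempty β] (R : α → β → Prop)
    (s : Multiset α) (t : Multiset β) (h : Multiset.Rel R s t) :
    s.Nodup → t.Nodup → ∃ e : α → β,
      Set.BijOn e {a | a ∈ s} {b | b ∈ t} ∧ ∀ a ∈ s, R a (e a) := by
  classical
  induction h with
  | zero =>
    intro _ _
    exact ⟨fun _ => Classical.arbitrary β, by simp [Set.BijOn], by simp⟩
  | @cons a b s t hab hst ih =>
    intro hs ht
    rw [Multiset.nodup_cons] at hs ht
    obtain ⟨e, ⟨hmap, hinj, hsurj⟩, hrel⟩ := ih hs.2 ht.2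
    refine ⟨Function.update e a b, ⟨?_, ?_, ?_⟩, ?_⟩
    · intro x hx
      simp only [Set.mem_setOf_eq, Multiset.mem_cons] at hx ⊢
      rcases hx with rfl | hx
      · simp
      · have hxa : x ≠ a := fun h => hs.1 (h ▸ hx)
        rw [Function.update_of_ne hxa]
        exact Or.inr (hmap hx)
    · intro x hx y hy hxy
      simp only [Set.mem_setOf_eq, Multiset.mem_cons] at hx hy
      rcases hx with rfl | hx <;> rcases hy with rfl | hy
      · rfl
      · exfalso
        have hya : y ≠ x := fun h => hs.1 (h ▸ hy)
        rw [Function.update_self, Function.update_of_ne hya] at hxy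
        exact ht.1 (hxy ▸ hmap hy)
      · exfalso
        have hxa : x ≠ y := fun h => hs.1 (h ▸ hx)
        rw [Function.update_self, Function.update_of_ne hxa] at hxy
        exact ht.1 (hxy.symm ▸ hmap hx)
      · have hxa : x ≠ a := fun h => hs.1 (h ▸ hx)
        have hya : y ≠ a := fun h => hs.1 (h ▸ hy)
        rw [Function.update_of_ne hxa, Function.update_of_ne hya] at hxy
        exact hinj hx hy hxy
    · intro y hy
      simp only [Set.mem_setOf_eq, Multiset.mem_cons] at hy ⊢
      rcases hy with rfl | hy
      · exact ⟨a, Or.inl rfl, by simp⟩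
      · obtain ⟨x, hx, rfl⟩ := hsurj hy
        have hxa : x ≠ a := fun h => hs.1 (h ▸ hx)
        exact ⟨x, Or.inr hx, by rw [Function.update_of_ne hxa]⟩
    · intro x hx
      rw [Multiset.mem_cons] at hx
      rcases hx with rfl | hx
      · simpa using hab
      · have hxa : x ≠ a := fun h => hs.1 (h ▸ hx)
        rw [Function.update_of_ne hxa]
        exact hrel x hx


theorem exists_relabel {x y : Fin n → ℝ} (h : ptype x = ptype y) :
    ∃ (ψ : ℝ → ℝ) (τ : Equiv.Perm (Fin n)),
      Set.InjOn ψ (Set.range x) ∧ ψ ∘ x = y ∘ τ := by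
  classical
  set sx := Finset.image x Finset.univ with hsx
  set sy := Finset.image y Finset.univ with hsy
  have hrel : Multiset.Rel
      (fun v w => (Finset.univ.filter fun j => x j = v).card
        = (Finset.univ.filter fun j => y j = w).card) sx.val sy.val :=
    Multiset.rel_map.mp (Multiset.rel_eq.mpr h)
  obtain ⟨e, hbij, hcard⟩ := rel_nodup_exists_bij _ _ _ hrel sx.nodup sy.nodup
  have hmemx : {v : ℝ | v ∈ sx.val} = Set.range x := by
    ext v; simp [hsx, ← Finset.mem_def, Finset.mem_image, List.mem_ofFn, eq_comm]
  have hmemy : {v : ℝ | v ∈ sy.val} = Set.range y := by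
    ext v; simp [hsy, ← Finset.mem_def, Finset.mem_image, List.mem_ofFn, eq_comm]
  rw [hmemx, hmemy] at hbij
  -- fiber cardinalities of e ∘ x and y agree
  have hfib : ∀ c : ℝ, Fintype.card {j // e (x j) = c} = Fintype.card {j // y j = c} := by
    intro c
    rw [Fintype.card_subtype, Fintype.card_subtype]
    by_cases hc : c ∈ Set.range y
    · obtain ⟨v, hv, rfl⟩ := hbij.surjOn hc
      have : (Finset.univ.filter fun j => e (x j) = e v)
          = (Finset.univ.filter fun j => x j = v) := by
        ext j
        simp only [Finset.mem_filter, Finset.mem_univ, true_and]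
        exact ⟨fun hj => hbij.injOn (Set.mem_range_self j) hv hj, fun hj => by rw [hj]⟩
      rw [this]
      have hv' : v ∈ sx.val := by
        rw [show (sx.val : Multiset ℝ) = sx.1 from rfl, ← Finset.mem_def]
        simpa [hsx, Finset.mem_image, eq_comm] using hv
      exact hcard v hv'
    · have h1 : (Finset.univ.filter fun j => e (x j) = c) = ∅ := by
        rw [Finset.filter_eq_empty_iff]
        intro j _ hj
        exact hc (hj ▸ hbij.mapsTo (Set.mem_range_self j))
      have h2 : (Finset.univ.filter fun j => y j = c) = ∅ := by
        rw [Finset.filter_eq_empty_iff]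
        intro j _ hj
        exact hc ⟨j, hj⟩
      rw [h1, h2]
  -- glue fiber equivs
  let τ : Fin n ≃ Fin n :=
    Equiv.ofFiberEquiv (f := fun j => e (x j)) (g := y)
      (fun c => Fintype.equivOfCardEq (hfib c))
  refine ⟨e, τ, hbij.injOn, ?_⟩
  funext j
  exact (Equiv.ofFiberEquiv_map (f := fun j => e (x j)) (g := y) _ j).symm

theorem comp_psmul (ψ : ℝ → ℝ) (σ : Equiv.Perm (Fin n)) (z : Fin n → ℝ) :
    ψ ∘ psmul σ z = psmul σ (ψ ∘ z) := rfl

theorem image_orbitUnder (ψ : ℝ → ℝ) (H : Set (Equiv.Perm (Fin n))) (z : Fin n → ℝ) :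
    (fun u => ψ ∘ u) '' orbitUnder H z = orbitUnder H (ψ ∘ z) := by
  ext u
  constructor
  · rintro ⟨v, ⟨σ, hσ, rfl⟩, rfl⟩
    exact ⟨σ, hσ, (comp_psmul ψ σ z).symm⟩
  · rintro ⟨σ, hσ, rfl⟩
    exact ⟨psmul σ z, ⟨σ, hσ, rfl⟩, comp_psmul ψ σ z⟩

theorem numOrbitsUnder_porbit_congr (H : Set (Equiv.Perm (Fin n))) {x y : Fin n → ℝ}
    (h : ptype x = ptype y) :
    numOrbitsUnder H (porbit x) = numOrbitsUnder H (porbit y) := by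
  obtain ⟨ψ, τ, hinj, hψx⟩ := exists_relabel h
  have hyx : y = ψ ∘ psmul τ x := by
    rw [comp_psmul, hψx]
    funext j
    simp [psmul]
  set S₁ := {O : Set (Fin n → ℝ) | ∃ z ∈ porbit x, O = orbitUnder H z} with hS₁
  set S₂ := {O : Set (Fin n → ℝ) | ∃ z ∈ porbit y, O = orbitUnder H z} with hS₂
  set Φ : Set (Fin n → ℝ) → Set (Fin n → ℝ) := fun O => (fun u => ψ ∘ u) '' O with hΦ
  -- porbit x members take values in range x
  have hval : ∀ z ∈ porbit x, ∀ j, z j ∈ Set.range x := by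
    rintro z ⟨ρ, rfl⟩ j
    exact ⟨ρ⁻¹ j, rfl⟩
  have hsub : ∀ O ∈ S₁, O ⊆ {u : Fin n → ℝ | ∀ j, u j ∈ Set.range x} := by
    rintro O ⟨z, hz, rfl⟩ u hu
    obtain ⟨σ, _, rfl⟩ := hu
    intro j
    have : psmul σ z ∈ porbit x := by
      rw [← porbit_eq_of_mem hz]
      exact ⟨σ, rfl⟩
    exact hval _ this j
  -- the "comp with ψ" map is injective on functions valued in range x
  have hinj' : Set.InjOn (fun u => ψ ∘ u) {u : Fin n → ℝ | ∀ j, u j ∈ Set.range x} := by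
    intro u hu v hv huv
    funext j
    exact hinj (hu j) (hv j) (congrFun huv j)
  have himg : Φ '' S₁ = S₂ := by
    apply Set.Subset.antisymm
    · rintro _ ⟨O, ⟨z, hz, rfl⟩, rfl⟩
      refine ⟨ψ ∘ z, ?_, (image_orbitUnder ψ H z)⟩
      obtain ⟨ρ, rfl⟩ := hz
      rw [comp_psmul, hψx]
      refine ⟨ρ * τ⁻¹, ?_⟩
      have : (y ∘ ⇑τ) = psmul τ⁻¹ y := by simp [psmul]
      rw [this, psmul_mul]
    · rintro O ⟨z', hz', rfl⟩
      obtain ⟨ρ, rfl⟩ := hz'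
      rw [hyx, ← comp_psmul, psmul_mul]
      exact ⟨orbitUnder H (psmul (ρ * τ) x), ⟨psmul (ρ * τ) x, ⟨ρ * τ, rfl⟩, rfl⟩,
        image_orbitUnder ψ H _⟩
  have hΦinj : Set.InjOn Φ S₁ := by
    intro O₁ h₁ O₂ h₂ h12
    exact (hinj'.image_eq_image_iff (hsub O₁ h₁) (hsub O₂ h₂)).mp h12
  show S₁.ncard = S₂.ncard
  rw [← himg, Set.ncard_image_of_injOn hΦinj]

/-- canonical union of S_n-orbits of members -/
def bigOrbit {n : ℕ} (O : Set (Fin n → ℝ)) : Set (Fin n → ℝ) := {y | ∃ u ∈ O, y ∈ porbit u}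

theorem bigOrbit_orbitUnder {H : Set (Equiv.Perm (Fin n))} (h1 : (1 : Equiv.Perm (Fin n)) ∈ H)
    (p : Fin n → ℝ) : bigOrbit (orbitUnder H p) = porbit p := by
  ext y
  constructor
  · rintro ⟨u, ⟨σ, _, rfl⟩, hy⟩
    rwa [porbit_eq_of_mem ⟨σ, rfl⟩] at hy
  · intro hy
    exact ⟨p, ⟨1, h1, rfl⟩, hy⟩

open Classical in
/-- type of an orbit, as a partition -/
noncomputable def otype {n : ℕ} (O : Set (Fin n → ℝ)) : Nat.Partition n :=
  if h : ∃ p : Fin n → ℝ, O = porbit p then typePartition h.choose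
  else typePartition (fun _ => 0)

theorem otype_porbit (p : Fin n → ℝ) : otype (porbit p) = typePartition p := by
  have h : ∃ q : Fin n → ℝ, porbit p = porbit q := ⟨p, rfl⟩
  rw [otype, dif_pos h]
  have hspec := h.choose_spec
  have hp : p ∈ porbit h.choose := by rw [← hspec]; exact mem_porbit_self p
  apply Nat.Partition.ext
  rw [typePartition_parts, typePartition_parts]
  exact (ptype_eq_of_mem_porbit hp).symm

theorem decompose (H : Set (Equiv.Perm (Fin n))) (h1 : (1 : Equiv.Perm (Fin n)) ∈ H)
    (a : Fin N → (Fin n → ℝ))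
    (hPsym : ∀ σ, ∀ p ∈ Set.range a, psmul σ p ∈ Set.range a)
    (w : Nat.Partition n → (Fin n → ℝ)) (hw : ∀ l, ptype (w l) = l.parts) :
    numOrbitsUnder H (Set.range a)
      = ∑ m : Nat.Partition n, numOrbitsUnder H (porbit (w m)) *
          {O : Set (Fin n → ℝ) | ∃ p ∈ Set.range a, O = porbit p ∧ ptype p = m.parts}.ncard := by
  classical
  set Ufin : Finset (Set (Fin n → ℝ)) :=
    Finset.image (fun j => orbitUnder H (a j)) Finset.univ with hUfin
  set Tfin : Finset (Set (Fin n → ℝ)) :=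
    Finset.image (fun j => porbit (a j)) Finset.univ with hTfin
  have hLHS : numOrbitsUnder H (Set.range a) = Ufin.card := by
    rw [numOrbitsUnder, ← Set.ncard_coe_finset]
    congr 1
    rw [hUfin, Finset.coe_image, Finset.coe_univ, Set.image_univ]
    ext O
    constructor
    · rintro ⟨x, ⟨y, rfl⟩, rfl⟩
      exact ⟨y, rfl⟩
    · rintro ⟨y, rfl⟩
      exact ⟨a y, ⟨y, rfl⟩, rfl⟩
  -- fiberwise over bigOrbit
  have hstepA : Ufin.card = ∑ O ∈ Tfin, (Ufin.filter fun O' => bigOrbit O' = O).card := by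
    apply Finset.card_eq_sum_card_fiberwise
    intro O' hO'
    rw [hUfin, Finset.mem_coe, Finset.mem_image] at hO'
    obtain ⟨j, _, rfl⟩ := hO'
    rw [bigOrbit_orbitUnder h1, hTfin, Finset.mem_coe, Finset.mem_image]
    exact ⟨j, Finset.mem_univ j, rfl⟩
  have hstepB : ∀ O ∈ Tfin, (Ufin.filter fun O' => bigOrbit O' = O).card
      = numOrbitsUnder H O := by
    intro O hO
    rw [hTfin, Finset.mem_image] at hO
    obtain ⟨j, _, rfl⟩ := hO
    rw [numOrbitsUnder, ← Set.ncard_coe_finset]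
    congr 1
    ext O'
    simp only [Finset.coe_filter, Set.mem_setOf_eq, hUfin, Finset.mem_image,
      Finset.mem_univ, true_and]
    constructor
    · rintro ⟨⟨k, rfl⟩, hbig⟩
      rw [bigOrbit_orbitUnder h1] at hbig
      exact ⟨a k, hbig ▸ mem_porbit_self (a k), rfl⟩
    · rintro ⟨q, hq, rfl⟩
      have hqa : q ∈ Set.range a := by
        obtain ⟨σ, rfl⟩ := hq
        exact hPsym σ (a j) (Set.mem_range_self j)
      obtain ⟨k, rfl⟩ := hqa
      refine ⟨⟨k, rfl⟩, ?_⟩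
      rw [bigOrbit_orbitUnder h1]
      exact porbit_eq_of_mem hq
  have hstepC : ∑ O ∈ Tfin, numOrbitsUnder H O
      = ∑ m : Nat.Partition n, ∑ O ∈ Tfin.filter fun O => otype O = m,
          numOrbitsUnder H O := by
    rw [Finset.sum_fiberwise_of_maps_to (fun O _ => Finset.mem_univ (otype O))]
  have hstepD : ∀ m : Nat.Partition n,
      ∑ O ∈ Tfin.filter (fun O => otype O = m), numOrbitsUnder H O
        = numOrbitsUnder H (porbit (w m)) * (Tfin.filter fun O => otype O = m).card := by
    intro m
    rw [Finset.sum_congr rfl (fun O hO => ?_), Finset.sum_const, smul_eq_mul, mul_comm]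
    rw [Finset.mem_filter, hTfin, Finset.mem_image] at hO
    obtain ⟨⟨j, _, rfl⟩, hot⟩ := hO
    rw [otype_porbit] at hot
    apply numOrbitsUnder_porbit_congr
    rw [hw m, ← hot, typePartition_parts]
  have hstepE : ∀ m : Nat.Partition n, (Tfin.filter fun O => otype O = m).card
      = {O : Set (Fin n → ℝ) | ∃ p ∈ Set.range a, O = porbit p ∧ ptype p = m.parts}.ncard := by
    intro m
    rw [← Set.ncard_coe_finset]
    congr 1
    ext O
    simp only [Finset.coe_filter, Set.mem_setOf_eq, hTfin, Finset.mem_image,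
      Finset.mem_univ, true_and]
    constructor
    · rintro ⟨⟨j, rfl⟩, hot⟩
      rw [otype_porbit] at hot
      exact ⟨a j, Set.mem_range_self j, rfl, by rw [← hot, typePartition_parts]⟩
    · rintro ⟨p, ⟨j, rfl⟩, rfl, htp⟩
      refine ⟨⟨j, rfl⟩, ?_⟩
      rw [otype_porbit]
      apply Nat.Partition.ext
      rw [typePartition_parts, htp]
  rw [hLHS, hstepA, Finset.sum_congr rfl hstepB, hstepC,
    Finset.sum_congr rfl (fun m _ => hstepD m)]
  exact Finset.sum_congr rfl fun m _ => by rw [hstepE m]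

theorem nat_card_setOf {X : Type} [Fintype X] (p : X → Prop) [DecidablePred p] :
    Nat.card {x : X | p x} = (Finset.univ.filter p).card := by
  rw [Nat.card_eq_fintype_card (α := {x : X | p x})]
  simp [Fintype.card_subtype, Set.mem_setOf_eq]

theorem orbit_count_mul_card {G X : Type} [Group G] [Fintype G] [Fintype X]
    (ρ : G →* Equiv.Perm X) :
    {O : Set X | ∃ x : X, O = {y | ∃ g : G, ρ g x = y}}.ncard * Fintype.card G
      = ∑ g : G, Nat.card {x : X | ρ g x = x} := by
  classical
  letI : MulAction G X := MulAction.compHom X ρ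
  have hsmul : ∀ (g : G) (x : X), g • x = ρ g x := fun g x => rfl
  have horb : ∀ x : X, {y | ∃ g : G, ρ g x = y} = MulAction.orbit G x := by
    intro x
    ext y
    rw [Set.mem_setOf_eq, MulAction.mem_orbit_iff]
    simp only [hsmul]
  -- identify the set of orbits with the orbit-space quotient
  have hquot : {O : Set X | ∃ x : X, O = {y | ∃ g : G, ρ g x = y}}.ncard
      = Fintype.card (Quotient (MulAction.orbitRel G X)) := by
    rw [← Nat.card_coe_set_eq, ← Nat.card_eq_fintype_card]
    apply Nat.card_congr
    refine Equiv.ofBijective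
      (fun O => Quotient.mk _ O.2.choose) ⟨?_, ?_⟩
    · rintro ⟨O₁, h₁⟩ ⟨O₂, h₂⟩ h
      have e1 := h₁.choose_spec
      have e2 := h₂.choose_spec
      rw [horb] at e1 e2
      apply Subtype.ext
      show O₁ = O₂
      rw [e1, e2]
      exact MulAction.orbit_eq_iff.mpr (MulAction.orbitRel_apply.mp (Quotient.exact h))
    · rintro ⟨x⟩
      have hx : ∃ x0 : X, MulAction.orbit G x = {y | ∃ g : G, ρ g x0 = y} :=
        ⟨x, (horb x).symm⟩
      refine ⟨⟨MulAction.orbit G x, hx⟩, ?_⟩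
      apply Quotient.sound
      have hspec := hx.choose_spec
      rw [horb] at hspec
      refine MulAction.orbitRel_apply.mpr ?_
      exact MulAction.orbit_eq_iff.mp hspec.symm
  rw [hquot]
  letI : ∀ g : G, Fintype (MulAction.fixedBy X g) := fun g => Fintype.ofFinite _
  have hburn := MulAction.sum_card_fixedBy_eq_card_orbits_mul_card_group G X
  rw [← hburn]
  apply Finset.sum_congr rfl
  intro g _
  rw [Nat.card_eq_fintype_card (α := {x : X | ρ g x = x})]
  apply Fintype.card_congr
  apply Equiv.subtypeEquivRight
  intro x
  rw [MulAction.fixedBy]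
  simp only [Set.mem_setOf_eq, hsmul]

theorem fix_card_eq (f : Fin N → ((Fin n → ℝ) → ℝ)) (hf : LinearIndependent ℝ f)
    (a : Fin N → (Fin n → ℝ)) (ha : Function.Injective a)
    (huni : Unisolvent (Submodule.span ℝ (Set.range f)) a)
    (bfun : Equiv.Perm (Fin n) → Fin N → Fin N)
    (hbfun : ∀ σ j, f (bfun σ j) = fsmul σ (f j))
    (afun : Equiv.Perm (Fin n) → Fin N → Fin N)
    (hafun : ∀ σ i, a (afun σ i) = psmul σ (a i))
    (σ : Equiv.Perm (Fin n)) :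
    (Finset.univ.filter fun j => bfun σ j = j).card
      = (Finset.univ.filter fun i => afun σ i = i).card := by
  classical
  set M : Matrix (Fin N) (Fin N) ℝ := Matrix.of fun i j => f j (a i) with hM
  -- unisolvence gives invertibility
  have hUnit : IsUnit M := by
    rw [← Matrix.mulVec_injective_iff_isUnit]
    intro c c' hcc
    have hmem : ∀ d : Fin N → ℝ,
        (∑ j, d j • f j) ∈ Submodule.span ℝ (Set.range f) :=
      fun d => Submodule.sum_mem _ fun j _ =>
        Submodule.smul_mem _ _ (Submodule.subset_span ⟨j, rfl⟩)
    have heval : ∀ (d : Fin N → ℝ) (i : Fin N),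
        (∑ j, d j • f j) (a i) = M.mulVec d i := by
      intro d i
      rw [Finset.sum_apply, Matrix.mulVec]
      simp [dotProduct, hM, mul_comm]
    obtain ⟨g, -, hgu⟩ := huni (M.mulVec c)
    have h1 : (⟨∑ j, c j • f j, hmem c⟩ : Submodule.span ℝ (Set.range f)) = g :=
      hgu _ fun i => by
        show (∑ j, c j • f j) (a i) = M.mulVec c i
        exact heval c i
    have h2 : (⟨∑ j, c' j • f j, hmem c'⟩ : Submodule.span ℝ (Set.range f)) = g :=
      hgu _ fun i => by
        show (∑ j, c' j • f j) (a i) = M.mulVec c i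
        rw [heval c' i, hcc]
    have hsum : ∑ j, c j • f j = ∑ j, c' j • f j := by
      have := h1.trans h2.symm
      exact congrArg Subtype.val this
    funext j
    have hzero : ∑ j, (c j - c' j) • f j = 0 := by
      simp only [sub_smul, Finset.sum_sub_distrib, hsum, sub_self]
    have := (Fintype.linearIndependent_iff.mp hf) (fun j => c j - c' j) hzero j
    linarith [this]
  have hdet : IsUnit M.det := (Matrix.isUnit_iff_isUnit_det M).mp hUnit
  set Q : Matrix (Fin N) (Fin N) ℝ :=
    Matrix.of fun j k => if j = bfun σ k then (1 : ℝ) else 0 with hQ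
  set R : Matrix (Fin N) (Fin N) ℝ :=
    Matrix.of fun i j => if j = afun σ⁻¹ i then (1 : ℝ) else 0 with hR
  -- intertwining
  have hMQRM : M * Q = R * M := by
    ext i k
    rw [Matrix.mul_apply, Matrix.mul_apply]
    have hlhs : ∑ j, M i j * Q j k = M i (bfun σ k) := by
      rw [Finset.sum_eq_single (bfun σ k)]
      · simp [hQ]
      · intro j _ hj; simp [hQ, hj]
      · intro hh; exact absurd (Finset.mem_univ _) hh
    have hrhs : ∑ j, R i j * M j k = M (afun σ⁻¹ i) k := by
      rw [Finset.sum_eq_single (afun σ⁻¹ i)]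
      · simp [hR]
      · intro j _ hj; simp [hR, hj]
      · intro hh; exact absurd (Finset.mem_univ _) hh
    rw [hlhs, hrhs]
    show f (bfun σ k) (a i) = f k (a (afun σ⁻¹ i))
    rw [hbfun, hafun]
    rfl
  have hQR : Q = M⁻¹ * (R * M) := by
    rw [← hMQRM, Matrix.nonsing_inv_mul_cancel_left _ _ hdet]
  have htrace : Matrix.trace Q = Matrix.trace R := by
    rw [hQR, Matrix.trace_mul_comm, Matrix.mul_assoc, Matrix.mul_nonsing_inv _ hdet,
      Matrix.mul_one]
  -- traces are fixed point counts
  have htQ : Matrix.trace Q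
      = ((Finset.univ.filter fun j => bfun σ j = j).card : ℝ) := by
    rw [Matrix.trace, Finset.card_filter]
    push_cast
    apply Finset.sum_congr rfl
    intro j _
    simp [Matrix.diag, hQ, eq_comm]
  have htR : Matrix.trace R
      = ((Finset.univ.filter fun i => afun σ⁻¹ i = i).card : ℝ) := by
    rw [Matrix.trace, Finset.card_filter]
    push_cast
    apply Finset.sum_congr rfl
    intro i _
    simp [Matrix.diag, hR, eq_comm]
  -- fixed points of afun σ⁻¹ = fixed points of afun σ
  have hamul : ∀ σ τ i, afun σ (afun τ i) = afun (σ * τ) i := by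
    intro σ τ i
    apply ha
    rw [hafun, hafun, hafun, psmul_mul]
  have haone : ∀ i, afun 1 i = i := by
    intro i; apply ha; rw [hafun, psmul_one]
  have hfixa : (Finset.univ.filter fun i => afun σ⁻¹ i = i)
      = (Finset.univ.filter fun i => afun σ i = i) := by
    ext i
    simp only [Finset.mem_filter, Finset.mem_univ, true_and]
    constructor
    · intro h
      conv_lhs => rw [← h]
      rw [hamul, mul_inv_cancel, haone]
    · intro h
      conv_lhs => rw [← h]
      rw [hamul, inv_mul_cancel, haone]
  have : ((Finset.univ.filter fun j => bfun σ j = j).card : ℝ)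
      = ((Finset.univ.filter fun i => afun σ i = i).card : ℝ) := by
    rw [← htQ, htrace, htR, hfixa]
  exact_mod_cast this


end Stmt7Aux

open Stmt7Aux in
/-- in the symmetric unisolvent setup, with `w λ` a chosen point of type `λ` for
each partition `λ` of `n`, `H_λ = Stab (w λ)`, `v_{λμ}` the number of `H_λ`-orbits of the
`S_n`-orbit of `w μ`, `X_μ` the number of `S_n`-orbits of `P` of type `μ`, and `r_λ` the number
of `H_λ`-orbits of `B`, we have `Σ_μ v_{λμ} · X_μ = r_λ` for every partition `λ` of `n`. -/
theorem stmt_7 {n N : ℕ} (f : Fin N → ((Fin n → ℝ) → ℝ)) (hf : LinearIndependent ℝ f)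
    (hBsym : ∀ σ, ∀ g ∈ Set.range f, fsmul σ g ∈ Set.range f)
    (a : Fin N → (Fin n → ℝ)) (ha : Function.Injective a)
    (hPsym : ∀ σ, ∀ p ∈ Set.range a, psmul σ p ∈ Set.range a)
    (huni : Unisolvent (Submodule.span ℝ (Set.range f)) a)
    (w : Nat.Partition n → (Fin n → ℝ)) (hw : ∀ l, ptype (w l) = l.parts) :
    ∀ l : Nat.Partition n,
      ∑ m : Nat.Partition n,
        numOrbitsUnder (stab (w l)) (porbit (w m)) *
          {O : Set (Fin n → ℝ) | ∃ p ∈ Set.range a, O = porbit p ∧ ptype p = m.parts}.ncard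
      = fnumOrbitsUnder (stab (w l)) (Set.range f) := by
  intro l
  classical
  have hfinj : Function.Injective f := hf.injective
  -- index functions for the two permutation actions
  have hbex : ∀ (σ : Equiv.Perm (Fin n)) (j : Fin N), ∃ k, f k = fsmul σ (f j) :=
    fun σ j => hBsym σ (f j) ⟨j, rfl⟩
  choose bfun hbfun using hbex
  have haex : ∀ (σ : Equiv.Perm (Fin n)) (i : Fin N), ∃ k, a k = psmul σ (a i) :=
    fun σ i => hPsym σ (a i) ⟨i, rfl⟩
  choose afun hafun using haex
  have hbmul : ∀ σ τ j, bfun (σ * τ) j = bfun σ (bfun τ j) := by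
    intro σ τ j; apply hfinj; rw [hbfun, hbfun, hbfun, fsmul_mul]
  have hbone : ∀ j, bfun 1 j = j := fun j => hfinj (by rw [hbfun, fsmul_one])
  have hamul : ∀ σ τ i, afun (σ * τ) i = afun σ (afun τ i) := by
    intro σ τ i; apply ha; rw [hafun, hafun, hafun, psmul_mul]
  have haone : ∀ i, afun 1 i = i := fun i => ha (by rw [hafun, psmul_one])
  have hbbij : ∀ σ, Function.Bijective (bfun σ) := by
    intro σ
    apply Finite.injective_iff_bijective.mp
    intro i j hij
    have h2 : bfun σ⁻¹ (bfun σ i) = bfun σ⁻¹ (bfun σ j) := by rw [hij]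
    rwa [← hbmul, ← hbmul, inv_mul_cancel, hbone, hbone] at h2
  have habij : ∀ σ, Function.Bijective (afun σ) := by
    intro σ
    apply Finite.injective_iff_bijective.mp
    intro i j hij
    have h2 : afun σ⁻¹ (afun σ i) = afun σ⁻¹ (afun σ j) := by rw [hij]
    rwa [← hamul, ← hamul, inv_mul_cancel, haone, haone] at h2
  set G := stabSubgroup (w l) with hG
  letI : Fintype G := Fintype.ofFinite _
  let ρ₁ : G →* Equiv.Perm (Fin N) :=
    { toFun := fun g => Equiv.ofBijective _ (hbbij ↑g)
      map_one' := Equiv.ext fun j => by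
        show bfun ((1 : G) : Equiv.Perm (Fin n)) j = j
        rw [OneMemClass.coe_one, hbone]
      map_mul' := fun g h => Equiv.ext fun j => by
        show bfun ((g * h : G) : Equiv.Perm (Fin n)) j = bfun ↑g (bfun ↑h j)
        rw [Subgroup.coe_mul, hbmul] }
  let ρ₂ : G →* Equiv.Perm (Fin N) :=
    { toFun := fun g => Equiv.ofBijective _ (habij ↑g)
      map_one' := Equiv.ext fun i => by
        show afun ((1 : G) : Equiv.Perm (Fin n)) i = i
        rw [OneMemClass.coe_one, haone]
      map_mul' := fun g h => Equiv.ext fun i => by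
        show afun ((g * h : G) : Equiv.Perm (Fin n)) i = afun ↑g (afun ↑h i)
        rw [Subgroup.coe_mul, hamul] }
  have hρ₁ : ∀ (g : G) (j : Fin N), ρ₁ g j = bfun ↑g j := fun g j => rfl
  have hρ₂ : ∀ (g : G) (i : Fin N), ρ₂ g i = afun ↑g i := fun g i => rfl
  have hmemG : ∀ σ : Equiv.Perm (Fin n), σ ∈ G ↔ σ ∈ stab (w l) := fun σ => Iff.rfl
  set SP := {O : Set (Fin N) | ∃ i : Fin N, O = {k | ∃ g : G, ρ₂ g i = k}} with hSP
  set SF := {O : Set (Fin N) | ∃ j : Fin N, O = {k | ∃ g : G, ρ₁ g j = k}} with hSF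
  -- bridge for points
  have horbP : ∀ i : Fin N,
      orbitUnder (stab (w l)) (a i) = a '' {k | ∃ g : G, ρ₂ g i = k} := by
    intro i
    ext u
    constructor
    · rintro ⟨σ, hσ, rfl⟩
      exact ⟨afun σ i, ⟨⟨σ, hσ⟩, rfl⟩, hafun σ i⟩
    · rintro ⟨k, ⟨g, hk⟩, rfl⟩
      refine ⟨↑g, g.2, ?_⟩
      rw [hρ₂] at hk
      rw [← hk]
      exact (hafun _ i).symm
  have bridgeP : numOrbitsUnder (stab (w l)) (Set.range a) = SP.ncard := by
    have him : {O : Set (Fin n → ℝ) | ∃ p ∈ Set.range a, O = orbitUnder (stab (w l)) p}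
        = (Set.image a) '' SP := by
      ext O
      constructor
      · rintro ⟨p, ⟨i, rfl⟩, rfl⟩
        exact ⟨{k | ∃ g : G, ρ₂ g i = k}, ⟨i, rfl⟩, (horbP i).symm⟩
      · rintro ⟨O', ⟨i, rfl⟩, rfl⟩
        exact ⟨a i, ⟨i, rfl⟩, (horbP i).symm⟩
    rw [numOrbitsUnder, him,
      Set.ncard_image_of_injective _ (Set.image_injective.mpr ha)]
  -- bridge for functions
  have horbF : ∀ j : Fin N,
      forbitUnder (stab (w l)) (f j) = f '' {k | ∃ g : G, ρ₁ g j = k} := by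
    intro j
    ext u
    constructor
    · rintro ⟨σ, hσ, rfl⟩
      exact ⟨bfun σ j, ⟨⟨σ, hσ⟩, rfl⟩, hbfun σ j⟩
    · rintro ⟨k, ⟨g, hk⟩, rfl⟩
      refine ⟨↑g, g.2, ?_⟩
      rw [hρ₁] at hk
      rw [← hk]
      exact (hbfun _ j).symm
  have bridgeF : fnumOrbitsUnder (stab (w l)) (Set.range f) = SF.ncard := by
    have him : {O : Set ((Fin n → ℝ) → ℝ) | ∃ g ∈ Set.range f, O = forbitUnder (stab (w l)) g}
        = (Set.image f) '' SF := by
      ext O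
      constructor
      · rintro ⟨p, ⟨j, rfl⟩, rfl⟩
        exact ⟨{k | ∃ g : G, ρ₁ g j = k}, ⟨j, rfl⟩, (horbF j).symm⟩
      · rintro ⟨O', ⟨j, rfl⟩, rfl⟩
        exact ⟨f j, ⟨j, rfl⟩, (horbF j).symm⟩
    rw [fnumOrbitsUnder, him,
      Set.ncard_image_of_injective _ (Set.image_injective.mpr hfinj)]
  -- equality of the two orbit counts on indices
  have hfix : ∀ g : G, Nat.card {x : Fin N | ρ₁ g x = x} = Nat.card {x : Fin N | ρ₂ g x = x} := by
    intro g
    rw [nat_card_setOf, nat_card_setOf]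
    have e1 : (Finset.univ.filter fun j : Fin N => ρ₁ g j = j)
        = (Finset.univ.filter fun j : Fin N => bfun ↑g j = j) :=
      Finset.filter_congr fun j _ => by rw [hρ₁]
    have e2 : (Finset.univ.filter fun i : Fin N => ρ₂ g i = i)
        = (Finset.univ.filter fun i : Fin N => afun ↑g i = i) :=
      Finset.filter_congr fun i _ => by rw [hρ₂]
    rw [e1, e2]
    exact fix_card_eq f hf a ha huni bfun hbfun afun hafun ↑g
  have hcount : SP.ncard = SF.ncard := by
    have h1 := orbit_count_mul_card ρ₁
    have h2 := orbit_count_mul_card ρ₂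
    have hmul : SP.ncard * Fintype.card G = SF.ncard * Fintype.card G := by
      rw [hSP, hSF, h1, h2]
      exact (Finset.sum_congr rfl fun g _ => (hfix g).symm)
    exact Nat.eq_of_mul_eq_mul_right Fintype.card_pos hmul
  -- decomposition over types
  have h1mem : (1 : Equiv.Perm (Fin n)) ∈ stab (w l) := by
    show psmul 1 (w l) = w l
    exact psmul_one (w l)
  calc ∑ m : Nat.Partition n,
        numOrbitsUnder (stab (w l)) (porbit (w m)) *
          {O : Set (Fin n → ℝ) | ∃ p ∈ Set.range a, O = porbit p ∧ ptype p = m.parts}.ncard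
      = numOrbitsUnder (stab (w l)) (Set.range a) :=
        (decompose (stab (w l)) h1mem a hPsym w hw).symm
    _ = SP.ncard := bridgeP
    _ = SF.ncard := hcount
    _ = fnumOrbitsUnder (stab (w l)) (Set.range f) := bridgeF.symm
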